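/- (Pfaffian bilinear identity) For skew-symmetric Pfaffian entries on indices {a_1,a_2,a_3,a_4} ∪ {1,...,2N}: Pf(a_1,a_2,a_3,a_4,1,...,2N)·Pf(1,...,2N) = Pf(a_1,a_2,1,...,2N)·Pf(a_3,a_4,1,...,2N) - Pf(a_1,a_3,1,...,2N)·Pf(a_2,a_4,1,...,2N) + Pf(a_1,a_4,1,...,2N)·Pf(a_2,a_3,1,...,2N). -/

import Mathlib

open Matrix

/-- Pfaffian of an `n × n` matrix, defined recursively by Laplace-type expansion
along the first row (it agrees with the signed sum over perfect matchings;
it is `0` for odd `n` and `1` for `n = 0`). -/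
def pf {R : Type*} [CommRing R] : (n : ℕ) → Matrix (Fin n) (Fin n) R → R
  | 0, _ => 1
  | 1, _ => 0
  | n + 2, M => ∑ j : Fin (n + 1), (-1 : R) ^ (j : ℕ) * M 0 j.succ *
      pf n ((M.submatrix Fin.succ Fin.succ).submatrix j.succAbove j.succAbove)


/-- The Pfaffian of the skew-symmetric matrix whose `(k,l)` entry is
`P (v k) (v l)` for a list of indices `v`. -/
def pfIdx {R : Type*} [CommRing R] {ι : Type*} (P : ι → ι → R) {m : ℕ}
    (v : Fin m → ι) : R :=
  pf m (Matrix.of fun k l => P (v k) (v l))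


section PfAux


variable {R : Type*} [CommRing R] {ι : Type*}

/-- List-based Pfaffian: expansion along the first element. -/
def pfl (P : ι → ι → R) : List ι → R
  | [] => 1
  | x :: l => ∑ i : Fin l.length,
      (-1 : R) ^ (i : ℕ) * P x (l.get i) * pfl P (l.eraseIdx i)
termination_by l => l.length
decreasing_by have := i.isLt; rw [List.length_eraseIdx]; simp only [List.length_cons]; split <;> omega

lemma pfl_nil (P : ι → ι → R) : pfl P [] = 1 := by rw [pfl]

lemma pfl_cons (P : ι → ι → R) (x : ι) (l : List ι) {n : ℕ} (h : l.length = n) :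
    pfl P (x :: l) = ∑ i : Fin n,
      (-1 : R) ^ (i : ℕ) * P x (l.get (Fin.cast h.symm i)) * pfl P (l.eraseIdx i) := by
  subst h; rw [pfl]; rfl

lemma length_eraseIdx' {l : List ι} {n : ℕ} (h : l.length = n + 1) {i : ℕ}
    (hi : i < n + 1) : (l.eraseIdx i).length = n := by
  rw [List.length_eraseIdx]; split <;> omega

lemma pfl_odd (P : ι → ι → R) : ∀ (n : ℕ) (l : List ι), l.length = n → Odd n →
    pfl P l = 0 := by
  intro n
  induction n using Nat.strong_induction_on with
  | _ n ih =>
    rintro (_ | ⟨x, l⟩) h hodd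
    · simp only [List.length_nil] at h; rw [← h, Nat.odd_iff] at hodd; omega
    · simp only [List.length_cons] at h
      rw [pfl_cons P x l (rfl : l.length = l.length)]
      apply Finset.sum_eq_zero
      intro i _
      have hi := i.isLt
      rw [ih (n - 2) (by rw [Nat.odd_iff] at hodd; omega) (l.eraseIdx i)
        (by rw [List.length_eraseIdx]; split <;> omega)
        (by rw [Nat.odd_iff] at hodd ⊢; omega), mul_zero]


/-- The inverse position: if `j = i.succAbove k`, then `i = j.succAbove (dance i k)`. -/
def dance {n : ℕ} (i : Fin (n + 1)) (k : Fin n) : Fin n :=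
  if h : (k : ℕ) < (i : ℕ) then ⟨(i : ℕ) - 1, by have := i.isLt; omega⟩
  else ⟨(i : ℕ), by have := k.isLt; omega⟩

lemma dance_val {n : ℕ} (i : Fin (n + 1)) (k : Fin n) :
    ((dance i k : Fin n) : ℕ) = if (k : ℕ) < (i : ℕ) then (i : ℕ) - 1 else (i : ℕ) := by
  unfold dance; split <;> rfl

lemma succAbove_val {n : ℕ} (i : Fin (n + 1)) (k : Fin n) :
    ((i.succAbove k : Fin (n + 1)) : ℕ) = if (k : ℕ) < (i : ℕ) then (k : ℕ) else (k : ℕ) + 1 := by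
  rcases lt_or_ge (k.castSucc) i with h | h
  · have h' : (k : ℕ) < (i : ℕ) := by simpa [Fin.lt_iff_val_lt_val] using h
    rw [Fin.succAbove_of_castSucc_lt _ _ h, if_pos h']; simp
  · have h' : ¬ (k : ℕ) < (i : ℕ) := by
      simp only [Fin.le_iff_val_le_val, Fin.coe_castSucc] at h; omega
    rw [Fin.succAbove_of_le_castSucc _ _ h, if_neg h', Fin.val_succ]

lemma dance_key {n : ℕ} (i : Fin (n + 1)) (k : Fin n) :
    (i.succAbove k).succAbove (dance i k) = i := by
  have h1 := i.isLt; have h2 := k.isLt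
  apply Fin.ext
  rw [succAbove_val, dance_val, succAbove_val]
  split_ifs <;> omega

lemma dance_key2 {n : ℕ} (i : Fin (n + 1)) (k : Fin n) :
    dance (i.succAbove k) (dance i k) = k := by
  have h1 := i.isLt; have h2 := k.isLt
  apply Fin.ext
  rw [dance_val, dance_val, succAbove_val]
  split_ifs <;> omega

lemma canc {n : ℕ} (F : Fin (n + 1) → Fin (n + 1) → R) (hF : ∀ i j, F i j = F j i) :
    ∑ i : Fin (n + 1), ∑ k : Fin n, (-1 : R) ^ ((i : ℕ) + (k : ℕ)) * F i (i.succAbove k) = 0 := by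
  rw [← Finset.sum_product']
  refine Finset.sum_involution (fun p _ => (p.1.succAbove p.2, dance p.1 p.2))
    ?_ ?_ (fun a ha => Finset.mem_univ _) ?_
  · rintro ⟨i, k⟩ -
    simp only
    have key := dance_key i k
    have hFF : F (i.succAbove k) ((i.succAbove k).succAbove (dance i k)) = F i (i.succAbove k) := by
      rw [key]; exact hF _ _
    rw [hFF]
    have h1 := i.isLt; have h2 := k.isLt
    have e2 : ((i.succAbove k : Fin (n+1)) : ℕ) + ((dance i k : Fin n) : ℕ) + 1
        = (i : ℕ) + (k : ℕ) ∨
        (i : ℕ) + (k : ℕ) + 1 = ((i.succAbove k : Fin (n+1)) : ℕ) + ((dance i k : Fin n) : ℕ) := by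
      rw [succAbove_val, dance_val]; split_ifs <;> omega
    rcases e2 with h | h
    · rw [← h, pow_succ]; ring
    · rw [← h, pow_succ]; ring
  · rintro ⟨i, k⟩ - -
    intro hcon
    exact Fin.succAbove_ne i k (congrArg Prod.fst hcon)
  · rintro ⟨i, k⟩ -
    simp only
    rw [dance_key, dance_key2]


lemma getElem_congr' (l : List α) {a b : ℕ} (h : a = b) (ha : a < l.length) :
    l[a]'ha = l[b]'(h ▸ ha) := by subst h; rfl

lemma eraseIdx_comm' : ∀ (l : List α) (i k : ℕ), i ≤ k →
    (l.eraseIdx i).eraseIdx k = (l.eraseIdx (k + 1)).eraseIdx i := by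
  intro l
  induction l with
  | nil => intro i k _; simp
  | cons x t ih =>
    intro i k hik
    match i, k with
    | 0, k => simp
    | i + 1, k + 1 =>
      simp only [List.eraseIdx_cons_succ]
      exact congrArg _ (ih i k (by omega))

/-- Erase two positions, in a symmetric way. -/
def er2 (l : List α) (i j : ℕ) : List α := (l.eraseIdx (max i j)).eraseIdx (min i j)

lemma er2_comm (l : List α) (i j : ℕ) : er2 l i j = er2 l j i := by
  simp [er2, max_comm, min_comm]

section
-- `succAbove_val` and `dance` from previous chunk are assumed; re-prove here for test
lemma succAbove_val' {n : ℕ} (i : Fin (n + 1)) (k : Fin n) :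
    ((i.succAbove k : Fin (n + 1)) : ℕ) = if (k : ℕ) < (i : ℕ) then (k : ℕ) else (k : ℕ) + 1 := by
  rcases lt_or_ge (k.castSucc) i with h | h
  · have h' : (k : ℕ) < (i : ℕ) := by simpa [Fin.lt_iff_val_lt_val] using h
    rw [Fin.succAbove_of_castSucc_lt _ _ h, if_pos h']; simp
  · have h' : ¬ (k : ℕ) < (i : ℕ) := by
      simp only [Fin.le_iff_val_le_val, Fin.coe_castSucc] at h; omega
    rw [Fin.succAbove_of_le_castSucc _ _ h, if_neg h', Fin.val_succ]

lemma eraseIdx_eraseIdx_er2 (l : List α) {n : ℕ} (i : Fin (n + 1)) (k : Fin n) :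
    (l.eraseIdx (i : ℕ)).eraseIdx (k : ℕ) = er2 l (i : ℕ) ((i.succAbove k : Fin (n+1)) : ℕ) := by
  have hs := succAbove_val' i k
  rw [er2, hs]
  split_ifs with h
  · rw [max_eq_left (by omega), min_eq_right (by omega)]
  · rw [max_eq_right (by omega), min_eq_left (by omega)]
    exact eraseIdx_comm' l _ _ (by omega)

lemma get_eraseIdx_cast {l : List α} {n : ℕ} (h : l.length = n + 1) (i : Fin (n + 1)) (k : Fin n)
    (h' : (l.eraseIdx (i : ℕ)).length = n) :
    (l.eraseIdx (i : ℕ)).get (Fin.cast h'.symm k) = l.get (Fin.cast h.symm (i.succAbove k)) := by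
  have hs := succAbove_val' i k
  have hik := i.isLt; have hkn := k.isLt
  rw [List.get_eq_getElem, List.get_eq_getElem]
  simp only [Fin.coe_cast]
  rw [List.getElem_eraseIdx]
  rcases Nat.lt_or_ge (k : ℕ) (i : ℕ) with hlt | hlt
  · rw [if_pos hlt] at hs
    rw [dif_pos hlt]
    exact getElem_congr' l (by omega) (by omega)
  · rw [if_neg (by omega)] at hs
    rw [dif_neg (by omega)]
    exact getElem_congr' l (by omega) (by omega)
end



lemma pfl_self (P : ι → ι → R) (x : ι) (l : List ι) {n : ℕ} (h : l.length = n) :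
    ∑ i : Fin n, (-1 : R) ^ (i : ℕ) * P x (l.get (Fin.cast h.symm i)) *
      pfl P (x :: l.eraseIdx (i : ℕ)) = 0 := by
  rcases n with _ | m
  · simp
  · have key : ∀ i : Fin (m + 1), (l.eraseIdx (i : ℕ)).length = m :=
      fun i => length_eraseIdx' h i.isLt
    calc ∑ i : Fin (m+1), (-1 : R) ^ (i : ℕ) * P x (l.get (Fin.cast h.symm i)) *
          pfl P (x :: l.eraseIdx (i : ℕ))
        = ∑ i : Fin (m+1), ∑ k : Fin m, (-1 : R) ^ ((i : ℕ) + (k : ℕ)) *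
            ((fun a b => P x (l.get (Fin.cast h.symm a)) * P x (l.get (Fin.cast h.symm b)) *
              pfl P (er2 l (a : ℕ) (b : ℕ))) i (i.succAbove k)) := by
          apply Finset.sum_congr rfl
          intro i _
          rw [pfl_cons P x (l.eraseIdx (i : ℕ)) (key i), Finset.mul_sum]
          apply Finset.sum_congr rfl
          intro k _
          rw [get_eraseIdx_cast h i k (key i), eraseIdx_eraseIdx_er2 l i k]
          simp only [pow_add]
          ring
      _ = 0 := canc
          (fun a b => P x (l.get (Fin.cast h.symm a)) * P x (l.get (Fin.cast h.symm b)) *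
            pfl P (er2 l (a : ℕ) (b : ℕ)))
          (fun a b => by beta_reduce; rw [er2_comm]; ring)

lemma pfl_pair (P : ι → ι → R) (x y : ι) (l : List ι) {n : ℕ} (h : l.length = n) :
    ∑ i : Fin n, (-1 : R) ^ (i : ℕ) *
      (P x (l.get (Fin.cast h.symm i)) * pfl P (y :: l.eraseIdx (i : ℕ)) +
       P y (l.get (Fin.cast h.symm i)) * pfl P (x :: l.eraseIdx (i : ℕ))) = 0 := by
  rcases n with _ | m
  · simp
  · have key : ∀ i : Fin (m + 1), (l.eraseIdx (i : ℕ)).length = m :=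
      fun i => length_eraseIdx' h i.isLt
    calc ∑ i : Fin (m+1), (-1 : R) ^ (i : ℕ) *
          (P x (l.get (Fin.cast h.symm i)) * pfl P (y :: l.eraseIdx (i : ℕ)) +
           P y (l.get (Fin.cast h.symm i)) * pfl P (x :: l.eraseIdx (i : ℕ)))
        = ∑ i : Fin (m+1), ∑ k : Fin m, (-1 : R) ^ ((i : ℕ) + (k : ℕ)) *
            ((fun a b => (P x (l.get (Fin.cast h.symm a)) * P y (l.get (Fin.cast h.symm b)) +
                P y (l.get (Fin.cast h.symm a)) * P x (l.get (Fin.cast h.symm b))) *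
              pfl P (er2 l (a : ℕ) (b : ℕ))) i (i.succAbove k)) := by
          apply Finset.sum_congr rfl
          intro i _
          rw [pfl_cons P y (l.eraseIdx (i : ℕ)) (key i),
            pfl_cons P x (l.eraseIdx (i : ℕ)) (key i), Finset.mul_sum, Finset.mul_sum,
            ← Finset.sum_add_distrib, Finset.mul_sum]
          apply Finset.sum_congr rfl
          intro k _
          rw [get_eraseIdx_cast h i k (key i), eraseIdx_eraseIdx_er2 l i k]
          simp only [pow_add]
          ring
      _ = 0 := canc
          (fun a b => (P x (l.get (Fin.cast h.symm a)) * P y (l.get (Fin.cast h.symm b)) +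
              P y (l.get (Fin.cast h.symm a)) * P x (l.get (Fin.cast h.symm b))) *
            pfl P (er2 l (a : ℕ) (b : ℕ)))
          (fun a b => by beta_reduce; rw [er2_comm]; ring)


lemma pfl_cons_cons (P : ι → ι → R) (x y : ι) (l : List ι) :
    pfl P (x :: y :: l) = P x y * pfl P l -
      ∑ k : Fin l.length, (-1 : R) ^ (k : ℕ) * P x (l.get k) * pfl P (y :: l.eraseIdx (k : ℕ)) := by
  rw [pfl_cons P x (y :: l) (show (y :: l).length = l.length + 1 from rfl), Fin.sum_univ_succ,
    sub_eq_add_neg, ← Finset.sum_neg_distrib]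
  congr 1
  · simp
  · apply Finset.sum_congr rfl
    intro k _
    simp only [Fin.val_succ, Fin.coe_cast, List.get_eq_getElem, List.getElem_cons_succ,
      List.eraseIdx_cons_succ, pow_succ]
    ring

lemma pfl_swap (P : ι → ι → R) (hP : ∀ a b, P a b = - P b a) (x y : ι) (l : List ι) :
    pfl P (x :: y :: l) + pfl P (y :: x :: l) = 0 := by
  have hp := pfl_pair P x y l (rfl : l.length = l.length)
  simp only [Fin.cast_refl, id_eq] at hp
  have comb : (∑ k : Fin l.length, (-1 : R) ^ (k : ℕ) * P x (l.get k) * pfl P (y :: l.eraseIdx (k : ℕ)))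
      + (∑ k : Fin l.length, (-1 : R) ^ (k : ℕ) * P y (l.get k) * pfl P (x :: l.eraseIdx (k : ℕ))) = 0 := by
    rw [← Finset.sum_add_distrib]
    refine Eq.trans (Finset.sum_congr rfl fun i _ => ?_) hp
    ring
  rw [pfl_cons_cons P x y l, pfl_cons_cons P y x l, hP y x]
  linear_combination -comb

lemma pfl_dup_dup (P : ι → ι → R) (b : ι) (l : List ι) :
    pfl P (b :: b :: l) = P b b * pfl P l := by
  rw [pfl_cons_cons P b b l]
  have hs := pfl_self P b l (rfl : l.length = l.length)
  simp only [Fin.cast_refl, id_eq] at hs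
  linear_combination -hs


lemma pfl_swapmid (P : ι → ι → R) (hP : ∀ a b, P a b = - P b a) :
    ∀ (n : ℕ) (u : List ι), u.length = n → ∀ (x y : ι) (w : List ι),
      pfl P (u ++ x :: y :: w) + pfl P (u ++ y :: x :: w) = 0 := by
  intro n
  induction n using Nat.strong_induction_on with
  | _ n ih =>
    rintro (_ | ⟨a, u⟩) hu x y w
    · simpa using pfl_swap P hP x y w
    · simp only [List.length_cons] at hu
      have hlen1 : (u ++ x :: y :: w).length = u.length + w.length + 2 := by
        simp [List.length_append]; omega
      have hlen2 : (u ++ y :: x :: w).length = u.length + w.length + 2 := by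
        simp [List.length_append]; omega
      rw [List.cons_append, List.cons_append,
        pfl_cons P a (u ++ x :: y :: w) hlen1,
        pfl_cons P a (u ++ y :: x :: w) hlen2]
      obtain ⟨p, hp⟩ : ∃ p : Fin (u.length + w.length + 2), (p : ℕ) = u.length :=
        ⟨⟨u.length, by omega⟩, rfl⟩
      obtain ⟨q, hq⟩ : ∃ q : Fin (u.length + w.length + 2), (q : ℕ) = u.length + 1 :=
        ⟨⟨u.length + 1, by omega⟩, rfl⟩
      rw [← Equiv.sum_comp (Equiv.swap p q) (fun i : Fin (u.length + w.length + 2) =>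
        (-1 : R) ^ (i : ℕ) * P a ((u ++ y :: x :: w).get (Fin.cast hlen2.symm i)) *
          pfl P ((u ++ y :: x :: w).eraseIdx i)), ← Finset.sum_add_distrib]
      apply Finset.sum_eq_zero
      rintro i -
      have hi := i.isLt
      rcases Nat.lt_trichotomy (i : ℕ) u.length with hlt | heq | hgt
      -- Case A : position inside u
      · have hsw : Equiv.swap p q i = i :=
          Equiv.swap_apply_of_ne_of_ne (Fin.ne_of_val_ne (by omega))
            (Fin.ne_of_val_ne (by omega))
        rw [hsw]
        have g1 : (u ++ x :: y :: w).get (Fin.cast hlen1.symm i) = u[(i : ℕ)]'hlt := by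
          simp only [List.get_eq_getElem, Fin.coe_cast]
          exact List.getElem_append_left hlt
        have g2 : (u ++ y :: x :: w).get (Fin.cast hlen2.symm i) = u[(i : ℕ)]'hlt := by
          simp only [List.get_eq_getElem, Fin.coe_cast]
          exact List.getElem_append_left hlt
        rw [g1, g2, List.eraseIdx_append_of_lt_length hlt, List.eraseIdx_append_of_lt_length hlt]
        have hel : (u.eraseIdx (i : ℕ)).length < n := by
          rw [List.length_eraseIdx]; split <;> omega
        have IH := ih _ hel (u.eraseIdx (i : ℕ)) rfl x y w
        linear_combination ((-1 : R) ^ (i : ℕ) * P a (u[(i : ℕ)]'hlt)) * IH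
      -- Case B : i = p
      · have hip : i = p := Fin.ext (by omega)
        rw [hip, Equiv.swap_apply_left]
        simp only [List.get_eq_getElem, Fin.coe_cast, hp, hq]
        have g1 : (u ++ x :: y :: w)[u.length]'(by rw [hlen1]; omega) = x := by
          rw [List.getElem_append_right (le_refl u.length)]
          simp
        have g2 : (u ++ y :: x :: w)[u.length + 1]'(by rw [hlen2]; omega) = x := by
          rw [List.getElem_append_right (by omega : u.length ≤ u.length + 1)]
          rw [getElem_congr' _ (by omega : u.length + 1 - u.length = 1)]
          simp
        have e1 : (u ++ x :: y :: w).eraseIdx u.length = u ++ y :: w := by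
          rw [List.eraseIdx_append_of_length_le (le_refl u.length), Nat.sub_self]
          rfl
        have e2 : (u ++ y :: x :: w).eraseIdx (u.length + 1) = u ++ y :: w := by
          rw [List.eraseIdx_append_of_length_le (by omega : u.length ≤ u.length + 1),
            (by omega : u.length + 1 - u.length = 1)]
          rfl
        rw [g1, g2, e1, e2, pow_succ]
        ring
      -- Case C and D : i > u.length
      · rcases Nat.lt_or_ge (u.length + 1) (i : ℕ) with hgt2 | hle2
        -- Case D : position inside w
        · have hsw : Equiv.swap p q i = i :=
            Equiv.swap_apply_of_ne_of_ne (Fin.ne_of_val_ne (by omega))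
              (Fin.ne_of_val_ne (by omega))
          rw [hsw]
          have hwi : (i : ℕ) - u.length - 2 < w.length := by omega
          have g1 : (u ++ x :: y :: w).get (Fin.cast hlen1.symm i)
              = w[(i : ℕ) - u.length - 2]'hwi := by
            simp only [List.get_eq_getElem, Fin.coe_cast]
            rw [List.getElem_append_right (by omega : u.length ≤ (i : ℕ)),
              getElem_congr' _ (by omega : (i:ℕ) - u.length = ((i:ℕ) - u.length - 2) + 2)]
            simp
          have g2 : (u ++ y :: x :: w).get (Fin.cast hlen2.symm i)
              = w[(i : ℕ) - u.length - 2]'hwi := by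
            simp only [List.get_eq_getElem, Fin.coe_cast]
            rw [List.getElem_append_right (by omega : u.length ≤ (i : ℕ)),
              getElem_congr' _ (by omega : (i:ℕ) - u.length = ((i:ℕ) - u.length - 2) + 2)]
            simp
          have e1 : (u ++ x :: y :: w).eraseIdx (i : ℕ)
              = u ++ x :: y :: w.eraseIdx ((i : ℕ) - u.length - 2) := by
            rw [List.eraseIdx_append_of_length_le (by omega : u.length ≤ (i : ℕ)),
              (by omega : (i:ℕ) - u.length = ((i:ℕ) - u.length - 2) + 2)]
            rfl
          have e2 : (u ++ y :: x :: w).eraseIdx (i : ℕ)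
              = u ++ y :: x :: w.eraseIdx ((i : ℕ) - u.length - 2) := by
            rw [List.eraseIdx_append_of_length_le (by omega : u.length ≤ (i : ℕ)),
              (by omega : (i:ℕ) - u.length = ((i:ℕ) - u.length - 2) + 2)]
            rfl
          rw [g1, g2, e1, e2]
          have IH := ih u.length (by omega) u rfl x y (w.eraseIdx ((i : ℕ) - u.length - 2))
          linear_combination ((-1 : R) ^ (i : ℕ) * P a (w[(i : ℕ) - u.length - 2]'hwi)) * IH
        -- Case C : i = q
        · have hiq : i = q := Fin.ext (by omega)
          rw [hiq, Equiv.swap_apply_right]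
          simp only [List.get_eq_getElem, Fin.coe_cast, hp, hq]
          have g1 : (u ++ x :: y :: w)[u.length + 1]'(by rw [hlen1]; omega) = y := by
            rw [List.getElem_append_right (by omega : u.length ≤ u.length + 1),
              getElem_congr' _ (by omega : u.length + 1 - u.length = 1)]
            simp
          have g2 : (u ++ y :: x :: w)[u.length]'(by rw [hlen2]; omega) = y := by
            rw [List.getElem_append_right (le_refl u.length)]
            simp
          have e1 : (u ++ x :: y :: w).eraseIdx (u.length + 1) = u ++ x :: w := by
            rw [List.eraseIdx_append_of_length_le (by omega : u.length ≤ u.length + 1),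
              (by omega : u.length + 1 - u.length = 1)]
            rfl
          have e2 : (u ++ y :: x :: w).eraseIdx u.length = u ++ x :: w := by
            rw [List.eraseIdx_append_of_length_le (le_refl u.length), Nat.sub_self]
            rfl
          rw [g1, g2, e1, e2, pow_succ]
          ring



lemma pfl_movefront (P : ι → ι → R) (hP : ∀ a b, P a b = - P b a) (u : List ι) :
    ∀ (z : ι) (w : List ι), pfl P (u ++ z :: w) = (-1 : R) ^ u.length * pfl P (z :: (u ++ w)) := by
  induction u using List.reverseRecOn with
  | nil => intro z w; simp
  | append_singleton u0 a ihu =>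
    intro z w
    have h1 : (u0 ++ [a]) ++ z :: w = u0 ++ a :: z :: w := by simp
    have h2 : z :: ((u0 ++ [a]) ++ w) = z :: (u0 ++ a :: w) := by simp
    rw [h1, h2, List.length_append, List.length_singleton]
    have hsw := pfl_swapmid P hP u0.length u0 rfl a z w
    have hih := ihu z (a :: w)
    rw [pow_succ]
    linear_combination hsw - hih

lemma pfl_rot (P : ι → ι → R) (hP : ∀ a b, P a b = - P b a) (l : List ι) (x : ι) :
    pfl P (l ++ [x]) = (-1 : R) ^ l.length * pfl P (x :: l) := by
  have := pfl_movefront P hP l x []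
  simpa using this

lemma neg_one_pow_twotorsion (s : ℕ) {d : R} (hd : d + d = 0) (X : R) :
    (-1 : R) ^ s * (d * X) = d * X := by
  rcases Nat.even_or_odd s with h | h
  · rw [h.neg_one_pow, one_mul]
  · rw [h.neg_one_pow]
    linear_combination (-X) * hd

lemma pfl_dup_end (P : ι → ι → R) (hP : ∀ a b, P a b = - P b a) (l : List ι) (m : ℕ)
    (hm : m < l.length) :
    pfl P (l ++ [l[m]]) = P (l[m]) (l[m]) * pfl P (l.eraseIdx m) := by
  set b := l[m] with hb
  have hrot := pfl_rot P hP l b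
  have hdecomp : l = l.take m ++ b :: l.drop (m + 1) := by
    conv_lhs => rw [← List.take_append_drop m l]
    rw [List.drop_eq_getElem_cons hm]
  have htl : (l.take m).length = m := by
    rw [List.length_take]; omega
  have hmf : pfl P (b :: l) = (-1 : R) ^ (m + 1) * pfl P (b :: b :: (l.take m ++ l.drop (m + 1))) := by
    conv_lhs => rw [hdecomp, ← List.cons_append]
    have := pfl_movefront P hP (b :: l.take m) b (l.drop (m + 1))
    rw [this, List.length_cons, htl, List.cons_append]
  have herase : l.take m ++ l.drop (m + 1) = l.eraseIdx m := (List.eraseIdx_eq_take_drop_succ l m).symm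
  have h2 : P b b + P b b = 0 := by linear_combination hP b b
  rw [hrot, hmf, herase, pfl_dup_dup, ← mul_assoc, ← pow_add, neg_one_pow_twotorsion _ h2]

lemma pfl_cons0 (P : ι → ι → R) (x : ι) (l : List ι) :
    pfl P (x :: l) = ∑ i : Fin l.length,
      (-1 : R) ^ (i : ℕ) * P x (l.get i) * pfl P (l.eraseIdx (i : ℕ)) := by
  rw [pfl]

theorem pfl_gp (P : ι → ι → R) (hP : ∀ a b, P a b = - P b a) :
    ∀ (n : ℕ) (τ σ : List ι), τ.length < n →
    (∑ i : Fin σ.length, (-1 : R) ^ (i : ℕ) *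
        (pfl P (τ ++ [σ.get i]) * pfl P (σ.eraseIdx (i : ℕ))))
    + (∑ j : Fin τ.length, (-1 : R) ^ (j : ℕ) *
        (pfl P (τ.eraseIdx (j : ℕ)) * pfl P (σ ++ [τ.get j]))) = 0 := by
  intro n
  induction n using Nat.strong_induction_on with
  | _ n ih =>
  intro τ σ hn
  rcases Nat.even_or_odd τ.length with hev | hoddτ
  · have z1 : ∀ i : Fin σ.length, pfl P (τ ++ [σ.get i]) = 0 := fun i =>
      pfl_odd P (τ.length + 1) _ (by simp) (Even.add_one hev)
    have z2 : ∀ j : Fin τ.length, pfl P (τ.eraseIdx (j : ℕ)) = 0 := fun j =>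
      pfl_odd P (τ.length - 1) _
        (by rw [List.length_eraseIdx]; have := j.isLt; split <;> omega)
        (by rw [Nat.even_iff] at hev; rw [Nat.odd_iff]; have := j.isLt; omega)
    rw [Finset.sum_eq_zero (fun i _ => by rw [z1 i, zero_mul, mul_zero]),
      Finset.sum_eq_zero (fun j _ => by rw [z2 j, zero_mul, mul_zero]), add_zero]
  rcases Nat.even_or_odd σ.length with hevσ | hoddσ
  · have z1 : ∀ i : Fin σ.length, pfl P (σ.eraseIdx (i : ℕ)) = 0 := fun i =>
      pfl_odd P (σ.length - 1) _
        (by rw [List.length_eraseIdx]; have := i.isLt; split <;> omega)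
        (by rw [Nat.even_iff] at hevσ; rw [Nat.odd_iff]; have := i.isLt; omega)
    have z2 : ∀ j : Fin τ.length, pfl P (σ ++ [τ.get j]) = 0 := fun j =>
      pfl_odd P (σ.length + 1) _ (by simp) (Even.add_one hevσ)
    rw [Finset.sum_eq_zero (fun i _ => by rw [z1 i, mul_zero, mul_zero]),
      Finset.sum_eq_zero (fun j _ => by rw [z2 j, mul_zero, mul_zero]), add_zero]
  -- main case
  rcases τ with _ | ⟨x, τ'⟩
  · rw [Nat.odd_iff] at hoddτ; simp at hoddτ
  simp only [List.length_cons] at hn hoddτ ⊢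
  have hevτ' : Even τ'.length := by
    rw [Nat.odd_iff] at hoddτ; rw [Nat.even_iff]; omega
  -- expansion of the first factor along x
  have hexp : ∀ s : ι, pfl P ((x :: τ') ++ [s]) =
      (∑ j : Fin τ'.length, (-1 : R) ^ (j : ℕ) * P x (τ'.get j) *
        pfl P (τ'.eraseIdx (j : ℕ) ++ [s]))
      + (-1 : R) ^ τ'.length * P x s * pfl P τ' := by
    intro s
    rw [List.cons_append,
      pfl_cons P x (τ' ++ [s]) (show (τ' ++ [s]).length = τ'.length + 1 by simp),
      Fin.sum_univ_castSucc]
    congr 1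
    · apply Finset.sum_congr rfl
      intro j _
      have hjlt : (j : ℕ) < τ'.length := j.isLt
      simp only [List.get_eq_getElem, Fin.coe_cast, Fin.coe_castSucc]
      rw [List.getElem_append_left hjlt, List.eraseIdx_append_of_lt_length hjlt]
    · simp only [Fin.val_last, List.get_eq_getElem, Fin.coe_cast]
      rw [List.getElem_append_right (le_refl τ'.length),
        List.eraseIdx_append_of_length_le (le_refl τ'.length)]
      simp
  have H1 : (∑ i : Fin σ.length, (-1 : R) ^ (i : ℕ) *
        (pfl P ((x :: τ') ++ [σ.get i]) * pfl P (σ.eraseIdx (i : ℕ))))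
      = (∑ j : Fin τ'.length, (-1 : R) ^ (j : ℕ) * P x (τ'.get j) *
          (∑ i : Fin σ.length, (-1 : R) ^ (i : ℕ) *
            (pfl P (τ'.eraseIdx (j : ℕ) ++ [σ.get i]) * pfl P (σ.eraseIdx (i : ℕ)))))
        + pfl P τ' * pfl P (x :: σ) := by
    calc (∑ i : Fin σ.length, (-1 : R) ^ (i : ℕ) *
        (pfl P ((x :: τ') ++ [σ.get i]) * pfl P (σ.eraseIdx (i : ℕ))))
        = ∑ i : Fin σ.length,
            ((∑ j : Fin τ'.length, ((-1 : R) ^ (j : ℕ) * P x (τ'.get j)) *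
              ((-1 : R) ^ (i : ℕ) *
                (pfl P (τ'.eraseIdx (j : ℕ) ++ [σ.get i]) * pfl P (σ.eraseIdx (i : ℕ)))))
            + pfl P τ' *
                ((-1 : R) ^ (i : ℕ) * P x (σ.get i) * pfl P (σ.eraseIdx (i : ℕ)))) := by
          apply Finset.sum_congr rfl
          intro i _
          rw [hexp (σ.get i), add_mul, mul_add, Finset.sum_mul, Finset.mul_sum]
          congr 1
          · apply Finset.sum_congr rfl
            intro j _
            ring
          · rw [hevτ'.neg_one_pow]
            ring
      _ = _ := by
          rw [Finset.sum_add_distrib]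
          congr 1
          · rw [Finset.sum_comm]
            apply Finset.sum_congr rfl
            intro j _
            rw [← Finset.mul_sum]
          · rw [pfl_cons0 P x σ, Finset.mul_sum]
  have H2 : (∑ j : Fin (τ'.length + 1), (-1 : R) ^ (j : ℕ) *
        (pfl P ((x :: τ').eraseIdx (j : ℕ)) * pfl P (σ ++ [(x :: τ').get j])))
      = pfl P τ' * pfl P (σ ++ [x])
        + ∑ k : Fin τ'.length, (-1 : R) ^ ((k : ℕ) + 1) *
            (pfl P (x :: τ'.eraseIdx (k : ℕ)) * pfl P (σ ++ [τ'.get k])) := by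
    rw [Fin.sum_univ_succ]
    congr 1 <;>
      simp [Fin.val_succ, List.eraseIdx_cons_succ, List.getElem_cons_succ]
  have H23 : pfl P τ' * pfl P (x :: σ) + pfl P τ' * pfl P (σ ++ [x]) = 0 := by
    rw [pfl_rot P hP σ x, hoddσ.neg_one_pow]
    ring
  have H14 : (∑ j : Fin τ'.length, (-1 : R) ^ (j : ℕ) * P x (τ'.get j) *
          (∑ i : Fin σ.length, (-1 : R) ^ (i : ℕ) *
            (pfl P (τ'.eraseIdx (j : ℕ) ++ [σ.get i]) * pfl P (σ.eraseIdx (i : ℕ)))))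
      + (∑ k : Fin τ'.length, (-1 : R) ^ ((k : ℕ) + 1) *
            (pfl P (x :: τ'.eraseIdx (k : ℕ)) * pfl P (σ ++ [τ'.get k]))) = 0 := by
    rcases τ' with _ | ⟨y, τ''⟩
    · simp
    simp only [List.length_cons] at hn ⊢
    have hlenj : ∀ j : Fin (τ''.length + 1),
        ((y :: τ'').eraseIdx (j : ℕ)).length = τ''.length :=
      fun j => length_eraseIdx' rfl j.isLt
    have hIH : ∀ j : Fin (τ''.length + 1),
        (∑ i : Fin σ.length, (-1 : R) ^ (i : ℕ) *
          (pfl P ((y :: τ'').eraseIdx (j : ℕ) ++ [σ.get i]) * pfl P (σ.eraseIdx (i : ℕ))))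
        = - ∑ k : Fin τ''.length, (-1 : R) ^ (k : ℕ) *
            (pfl P (er2 (y :: τ'') (j : ℕ) ((j.succAbove k : Fin (τ''.length + 1)) : ℕ)) *
             pfl P (σ ++ [(y :: τ'').get
               (Fin.cast (rfl : (y :: τ'').length = τ''.length + 1).symm (j.succAbove k))])) := by
      intro j
      have hgp := ih (τ''.length + 1) (by omega) ((y :: τ'').eraseIdx (j : ℕ)) σ
        (by rw [hlenj j]; omega)
      have key : (∑ k : Fin τ''.length,
            (fun i : Fin (((y :: τ'').eraseIdx (j : ℕ)).length) =>
              (-1 : R) ^ (i : ℕ) *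
                (pfl P (((y :: τ'').eraseIdx (j : ℕ)).eraseIdx (i : ℕ)) *
                 pfl P (σ ++ [((y :: τ'').eraseIdx (j : ℕ)).get i])))
              (Fin.cast (hlenj j).symm k))
          = ∑ k : Fin (((y :: τ'').eraseIdx (j : ℕ)).length),
              (-1 : R) ^ (k : ℕ) *
                (pfl P (((y :: τ'').eraseIdx (j : ℕ)).eraseIdx (k : ℕ)) *
                 pfl P (σ ++ [((y :: τ'').eraseIdx (j : ℕ)).get k])) :=
        Fin.sum_congr' (fun i : Fin (((y :: τ'').eraseIdx (j : ℕ)).length) =>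
              (-1 : R) ^ (i : ℕ) *
                (pfl P (((y :: τ'').eraseIdx (j : ℕ)).eraseIdx (i : ℕ)) *
                 pfl P (σ ++ [((y :: τ'').eraseIdx (j : ℕ)).get i])))
          (hlenj j).symm
      have key2 : (∑ k : Fin τ''.length,
            (fun i : Fin (((y :: τ'').eraseIdx (j : ℕ)).length) =>
              (-1 : R) ^ (i : ℕ) *
                (pfl P (((y :: τ'').eraseIdx (j : ℕ)).eraseIdx (i : ℕ)) *
                 pfl P (σ ++ [((y :: τ'').eraseIdx (j : ℕ)).get i])))
              (Fin.cast (hlenj j).symm k))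
          = ∑ k : Fin τ''.length, (-1 : R) ^ (k : ℕ) *
            (pfl P (er2 (y :: τ'') (j : ℕ) ((j.succAbove k : Fin (τ''.length + 1)) : ℕ)) *
             pfl P (σ ++ [(y :: τ'').get
               (Fin.cast (rfl : (y :: τ'').length = τ''.length + 1).symm (j.succAbove k))])) := by
        apply Finset.sum_congr rfl
        intro k _
        beta_reduce
        rw [get_eraseIdx_cast rfl j k (hlenj j)]
        simp only [Fin.coe_cast]
        rw [eraseIdx_eraseIdx_er2 (y :: τ'') j k]
      linear_combination hgp + key - key2
    calc (∑ j : Fin (τ''.length + 1), (-1 : R) ^ (j : ℕ) * P x ((y :: τ'').get j) *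
          (∑ i : Fin σ.length, (-1 : R) ^ (i : ℕ) *
            (pfl P ((y :: τ'').eraseIdx (j : ℕ) ++ [σ.get i]) * pfl P (σ.eraseIdx (i : ℕ)))))
      + (∑ k : Fin (τ''.length + 1), (-1 : R) ^ ((k : ℕ) + 1) *
            (pfl P (x :: (y :: τ'').eraseIdx (k : ℕ)) * pfl P (σ ++ [(y :: τ'').get k])))
        = ∑ j : Fin (τ''.length + 1), ((- ∑ k : Fin τ''.length,
            ((-1 : R) ^ (j : ℕ) * P x ((y :: τ'').get j)) * ((-1 : R) ^ (k : ℕ) *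
            (pfl P (er2 (y :: τ'') (j : ℕ) ((j.succAbove k : Fin (τ''.length + 1)) : ℕ)) *
             pfl P (σ ++ [(y :: τ'').get
               (Fin.cast (rfl : (y :: τ'').length = τ''.length + 1).symm (j.succAbove k))]))))
          + ∑ k : Fin τ''.length, ((-1 : R) ^ ((j : ℕ) + 1) *
            (((-1 : R) ^ (k : ℕ) * P x ((y :: τ'').get
               (Fin.cast (rfl : (y :: τ'').length = τ''.length + 1).symm (j.succAbove k))) *
             pfl P (er2 (y :: τ'') (j : ℕ) ((j.succAbove k : Fin (τ''.length + 1)) : ℕ)))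
            * pfl P (σ ++ [(y :: τ'').get j])))) := by
          rw [← Finset.sum_add_distrib]
          apply Finset.sum_congr rfl
          intro j _
          refine congrArg₂ (· + ·) ?_ ?_
          · rw [hIH j, mul_neg, Finset.mul_sum]
          · rw [pfl_cons P x ((y :: τ'').eraseIdx (j : ℕ)) (hlenj j), Finset.sum_mul,
              Finset.mul_sum]
            apply Finset.sum_congr rfl
            intro k _
            rw [get_eraseIdx_cast rfl j k (hlenj j), eraseIdx_eraseIdx_er2 (y :: τ'') j k]
      _ = - ∑ j : Fin (τ''.length + 1), ∑ k : Fin τ''.length,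
            (-1 : R) ^ ((j : ℕ) + (k : ℕ)) *
            ((fun a b =>
              (P x ((y :: τ'').get (Fin.cast (rfl :
                    (y :: τ'').length = τ''.length + 1).symm a)) *
                  pfl P (σ ++ [(y :: τ'').get (Fin.cast (rfl :
                    (y :: τ'').length = τ''.length + 1).symm b)]) +
                P x ((y :: τ'').get (Fin.cast (rfl :
                    (y :: τ'').length = τ''.length + 1).symm b)) *
                  pfl P (σ ++ [(y :: τ'').get (Fin.cast (rfl :
                    (y :: τ'').length = τ''.length + 1).symm a)])) *
              pfl P (er2 (y :: τ'') (a : ℕ) (b : ℕ))) j (j.succAbove k)) := by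
          rw [← Finset.sum_neg_distrib]
          apply Finset.sum_congr rfl
          intro j _
          rw [← Finset.sum_neg_distrib, ← Finset.sum_neg_distrib, ← Finset.sum_add_distrib]
          apply Finset.sum_congr rfl
          intro k _
          beta_reduce
          simp only [List.get_eq_getElem, Fin.coe_cast]
          ring
      _ = 0 := by
          rw [canc (fun a b : Fin (τ''.length + 1) =>
              (P x ((y :: τ'').get (Fin.cast (rfl :
                    (y :: τ'').length = τ''.length + 1).symm a)) *
                  pfl P (σ ++ [(y :: τ'').get (Fin.cast (rfl :
                    (y :: τ'').length = τ''.length + 1).symm b)]) +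
                P x ((y :: τ'').get (Fin.cast (rfl :
                    (y :: τ'').length = τ''.length + 1).symm b)) *
                  pfl P (σ ++ [(y :: τ'').get (Fin.cast (rfl :
                    (y :: τ'').length = τ''.length + 1).symm a)])) *
              pfl P (er2 (y :: τ'') (a : ℕ) (b : ℕ)))
            (fun a b => by beta_reduce; rw [er2_comm]; ring), neg_zero]
  rw [H1, H2]
  linear_combination H14 + H23

lemma ofFn_succAbove {n : ℕ} (f : Fin (n + 1) → ι) (j : Fin (n + 1)) :
    List.ofFn (f ∘ j.succAbove) = (List.ofFn f).eraseIdx (j : ℕ) := by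
  apply List.ext_getElem
  · simp [List.length_eraseIdx, j.isLt]
  · intro k h1 h2
    have hk : k < n := by simpa using h1
    have hjn := j.isLt
    rw [List.getElem_ofFn, List.getElem_eraseIdx]
    rcases Nat.lt_or_ge k (j : ℕ) with hlt | hge
    · rw [dif_pos hlt, List.getElem_ofFn]
      simp only [Function.comp_apply]
      refine congrArg f (Fin.ext ?_)
      rw [succAbove_val]
      show (if k < (j : ℕ) then k else k + 1) = k
      split <;> omega
    · rw [dif_neg (by omega), List.getElem_ofFn]
      simp only [Function.comp_apply]
      refine congrArg f (Fin.ext ?_)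
      rw [succAbove_val]
      show (if k < (j : ℕ) then k else k + 1) = k + 1
      split <;> omega

lemma pfIdx_eq_pfl (P : ι → ι → R) : ∀ (m : ℕ) (v : Fin m → ι),
    pfIdx P v = pfl P (List.ofFn v) := by
  intro m
  induction m using Nat.strong_induction_on with
  | _ m ih =>
  intro v
  match m with
  | 0 => simp [pfIdx, pf, pfl]
  | 1 =>
      show pf 1 _ = _
      rw [pf, List.ofFn_succ, pfl_cons0]
      refine (Finset.sum_eq_zero fun i _ => ?_).symm
      have : (i : ℕ) < 0 := by simpa using i.isLt
      omega
  | n + 2 =>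
      show pf (n + 2) _ = _
      rw [pf, List.ofFn_succ,
        pfl_cons P (v 0) (List.ofFn fun i => v i.succ) (List.length_ofFn (f := fun i => v i.succ))]
      apply Finset.sum_congr rfl
      intro j _
      rw [← ofFn_succAbove (fun i => v i.succ) j]
      have hm := ih n (by omega) ((fun i => v i.succ) ∘ j.succAbove)
      have hm' : pf n (Matrix.of fun k l =>
            P (((fun i => v i.succ) ∘ j.succAbove) k) (((fun i => v i.succ) ∘ j.succAbove) l))
          = pfl P (List.ofFn ((fun i => v i.succ) ∘ j.succAbove)) := hm
      have hsub : ((Matrix.of fun k l => P (v k) (v l)).submatrix Fin.succ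
            Fin.succ).submatrix j.succAbove j.succAbove
          = Matrix.of fun k l =>
            P (((fun i => v i.succ) ∘ j.succAbove) k)
              (((fun i => v i.succ) ∘ j.succAbove) l) := rfl
      have hget : (List.ofFn fun i => v i.succ).get
            (Fin.cast (List.length_ofFn (f := fun i => v i.succ)).symm j) = v j.succ := by
        rw [List.get_ofFn]
        exact congrArg (fun i : Fin (n + 1) => v i.succ) (Fin.ext rfl)
      rw [hsub, hm', hget]
      simp only [Matrix.of_apply]

theorem pfl_main (P : ι → ι → R) (hP : ∀ a b, P a b = - P b a)
    (a1 a2 a3 a4 : ι) (β : List ι) (hev : Even β.length) :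
    pfl P (a1 :: a2 :: a3 :: a4 :: β) * pfl P β
      = pfl P (a1 :: a2 :: β) * pfl P (a3 :: a4 :: β)
        - pfl P (a1 :: a3 :: β) * pfl P (a2 :: a4 :: β)
        + pfl P (a1 :: a4 :: β) * pfl P (a2 :: a3 :: β) := by
  have hgp := pfl_gp P hP ((a1 :: β).length + 1) (a1 :: β) (a2 :: a3 :: a4 :: β) (by omega)
  simp only [List.length_cons] at hgp
  rw [Fin.sum_univ_succ, Fin.sum_univ_succ, Fin.sum_univ_succ, Fin.sum_univ_succ] at hgp
  simp only [Fin.val_succ, Fin.val_zero, pow_zero, one_mul, List.get_eq_getElem,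
    List.getElem_cons_zero, List.getElem_cons_succ, List.eraseIdx_cons_zero,
    List.eraseIdx_cons_succ] at hgp
  have hA : ∀ s : ι, pfl P ((a1 :: β) ++ [s]) = pfl P (a1 :: s :: β) := by
    intro s
    have h1 := pfl_movefront P hP (a1 :: β) s []
    simp only [List.append_nil, List.length_cons] at h1
    have h2 := pfl_swap P hP s a1 β
    rw [h1, (hev.add_one).neg_one_pow]
    linear_combination -h2
  have hB : pfl P ((a2 :: a3 :: a4 :: β) ++ [a1]) = - pfl P (a1 :: a2 :: a3 :: a4 :: β) := by
    have h1 := pfl_movefront P hP (a2 :: a3 :: a4 :: β) a1 []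
    simp only [List.append_nil, List.length_cons] at h1
    rw [h1, (show Odd (β.length + 1 + 1 + 1) by
      rw [Nat.even_iff] at hev; rw [Nat.odd_iff]; omega).neg_one_pow]
    ring
  have hC : ∀ i : Fin β.length, pfl P ((a1 :: β) ++ [β[(i : ℕ)]]) =
      P (β[(i : ℕ)]) (β[(i : ℕ)]) * pfl P (a1 :: β.eraseIdx (i : ℕ)) := by
    intro i
    have h0 := pfl_dup_end P hP (a1 :: β) ((i : ℕ) + 1)
      (by simp only [List.length_cons]; omega)
    simp only [List.getElem_cons_succ, List.eraseIdx_cons_succ] at h0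
    exact h0
  have hD : ∀ i : Fin β.length, pfl P ((a2 :: a3 :: a4 :: β) ++ [β[(i : ℕ)]]) =
      P (β[(i : ℕ)]) (β[(i : ℕ)]) * pfl P (a2 :: a3 :: a4 :: β.eraseIdx (i : ℕ)) := by
    intro i
    have h0 := pfl_dup_end P hP (a2 :: a3 :: a4 :: β) ((i : ℕ) + 1 + 1 + 1)
      (by simp only [List.length_cons]; omega)
    simp only [List.getElem_cons_succ, List.eraseIdx_cons_succ] at h0
    exact h0
  have hsum : (∑ x : Fin β.length, (-1 : R) ^ ((x : ℕ) + 1 + 1 + 1) *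
        (pfl P ((a1 :: β) ++ [β[(x : ℕ)]]) * pfl P (a2 :: a3 :: a4 :: β.eraseIdx (x : ℕ))))
      + (∑ x : Fin β.length, (-1 : R) ^ ((x : ℕ) + 1) *
        (pfl P (a1 :: β.eraseIdx (x : ℕ)) *
          pfl P ((a2 :: a3 :: a4 :: β) ++ [β[(x : ℕ)]]))) = 0 := by
    rw [← Finset.sum_add_distrib]
    apply Finset.sum_eq_zero
    intro i _
    rw [hC i, hD i]
    have ht : P (β[(i : ℕ)]) (β[(i : ℕ)]) + P (β[(i : ℕ)]) (β[(i : ℕ)]) = 0 := by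
      linear_combination hP (β[(i : ℕ)]) (β[(i : ℕ)])
    linear_combination ((-1 : R) ^ ((i : ℕ) + 1) * pfl P (a1 :: β.eraseIdx (i : ℕ)) *
      pfl P (a2 :: a3 :: a4 :: β.eraseIdx (i : ℕ))) * ht
  rw [hA a2, hA a3, hA a4, hB] at hgp
  linear_combination -hgp + hsum

lemma ofFn_finAppend {m k : ℕ} (u : Fin m → ι) (w : Fin k → ι) :
    List.ofFn (Fin.append u w) = List.ofFn u ++ List.ofFn w := by
  apply List.ext_getElem
  · simp
  · intro n h1 h2
    have hn : n < m + k := by simpa using h1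
    rw [List.getElem_ofFn]
    rcases Nat.lt_or_ge n m with h | h
    · rw [List.getElem_append_left (by simpa using h), List.getElem_ofFn]
      rw [show (⟨n, hn⟩ : Fin (m + k)) = Fin.castAdd k ⟨n, h⟩ from Fin.ext rfl,
        Fin.append_left]
    · rw [List.getElem_append_right (by simpa using h), List.getElem_ofFn]
      rw [show (⟨n, hn⟩ : Fin (m + k)) = Fin.natAdd m ⟨n - m, by omega⟩ from
        Fin.ext (by simp; omega), Fin.append_right]
      congr 1
      apply Fin.ext
      simp


end PfAux

/-- Pfaffian bilinear identity:
`Pf(a₁,a₂,a₃,a₄,1,…,2N)·Pf(1,…,2N) = Pf(a₁,a₂,1,…,2N)·Pf(a₃,a₄,1,…,2N)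
 - Pf(a₁,a₃,1,…,2N)·Pf(a₂,a₄,1,…,2N) + Pf(a₁,a₄,1,…,2N)·Pf(a₂,a₃,1,…,2N)`. -/
theorem pf_bilinear_identity {R : Type*} [CommRing R] {ι : Type*} (N : ℕ)
    (P : ι → ι → R) (hP : ∀ x y, P x y = - P y x)
    (a1 a2 a3 a4 : ι) (idx : Fin (2 * N) → ι) :
    pfIdx P (Fin.append ![a1, a2, a3, a4] idx) * pfIdx P idx
      = pfIdx P (Fin.append ![a1, a2] idx) * pfIdx P (Fin.append ![a3, a4] idx)
        - pfIdx P (Fin.append ![a1, a3] idx) * pfIdx P (Fin.append ![a2, a4] idx)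
        + pfIdx P (Fin.append ![a1, a4] idx) * pfIdx P (Fin.append ![a2, a3] idx) := by
  have hb : ∀ (k : ℕ) (u : Fin k → ι),
      pfIdx P (Fin.append u idx) = pfl P (List.ofFn u ++ List.ofFn idx) := by
    intro k u
    rw [pfIdx_eq_pfl, ofFn_finAppend]
  rw [pfIdx_eq_pfl P (2 * N) idx, hb 4 ![a1, a2, a3, a4], hb 2 ![a1, a2], hb 2 ![a3, a4],
    hb 2 ![a1, a3], hb 2 ![a2, a4], hb 2 ![a1, a4], hb 2 ![a2, a3]]
  have h4 : List.ofFn ![a1, a2, a3, a4] = [a1, a2, a3, a4] := rfl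
  have h2 : ∀ b c : ι, List.ofFn ![b, c] = [b, c] := fun _ _ => rfl
  rw [h4, h2, h2, h2, h2, h2, h2]
  simp only [List.cons_append, List.nil_append]
  exact pfl_main P hP a1 a2 a3 a4 (List.ofFn idx)
    ⟨N, by rw [List.length_ofFn]; omega⟩
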